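/- arXiv:2103.11227 — 6 statements merged into one kernel-verified Lean document; each statement's English description precedes it below -/
import Mathlib

section
/- Let w ∈ CZ_n with ⟨w⟩_0 ≠ 0 and let k ∈ ℕ, k ≥ 1. Then there exists u ∈ CZ_n with ⟨u⟩_0 ≠ 0 such that u^k = w. -/
noncomputable section

/-- The ideal of squares of generators defining the zeon algebra. -/
def zeonIdeal (n : ℕ) : Ideal (MvPolynomial (Fin n) ℂ) :=
  Ideal.span (Set.range fun i : Fin n => (MvPolynomial.X i : MvPolynomial (Fin n) ℂ) ^ 2)

/-- The `n`-particle complex zeon algebra `CZ_n`. -/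
abbrev Zeon (n : ℕ) := MvPolynomial (Fin n) ℂ ⧸ zeonIdeal n

/-- The scalar part `⟨u⟩₀` of a zeon, as a `ℂ`-algebra homomorphism. -/
def scalarPart (n : ℕ) : Zeon n →ₐ[ℂ] ℂ :=
  Ideal.Quotient.liftₐ (zeonIdeal n) (MvPolynomial.aeval fun _ => (0 : ℂ)) (by
    intro a ha
    have h : zeonIdeal n ≤ RingHom.ker
        (MvPolynomial.aeval (R := ℂ) fun _ : Fin n => (0 : ℂ)).toRingHom := by
      rw [zeonIdeal, Ideal.span_le]
      rintro _ ⟨i, rfl⟩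
      simp [RingHom.mem_ker]
    exact h ha)

/-- The dual (nilpotent) part `Du = u - ⟨u⟩₀`. -/
def dualPart (n : ℕ) (u : Zeon n) : Zeon n := u - algebraMap ℂ (Zeon n) (scalarPart n u)

/-- The generator `ζ_i`. -/
def zeta (n : ℕ) (i : Fin n) : Zeon n := Ideal.Quotient.mk _ (MvPolynomial.X i)

/-- The basis blade `ζ_I`. -/
def blade (n : ℕ) (I : Finset (Fin n)) : Zeon n :=
  Ideal.Quotient.mk _ (∏ i ∈ I, MvPolynomial.X i)

/-- Binomial remainder: `(1+x)^k = 1 + k x + x² c` for some `c`. -/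
lemma binom_rem {A : Type*} [CommRing A] (k : ℕ) (x : A) :
    ∃ c : A, (1 + x) ^ k = 1 + (k : A) * x + x ^ 2 * c := by
  induction k with
  | zero => exact ⟨0, by simp⟩
  | succ k ih =>
    obtain ⟨c, hc⟩ := ih
    refine ⟨c * (1 + x) + (k : A), ?_⟩
    rw [pow_succ, hc]
    push_cast
    ring

/-- Elements with zero scalar part are nilpotent. -/
lemma nilpotent_of_scalarPart_eq_zero (n : ℕ) (x : Zeon n) (hx : scalarPart n x = 0) :
    IsNilpotent x := by
  obtain ⟨p, rfl⟩ := Ideal.Quotient.mk_surjective (I := zeonIdeal n) x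
  have hc : MvPolynomial.constantCoeff p = 0 := by
    have : (MvPolynomial.aeval fun _ : Fin n => (0 : ℂ)) p = 0 := hx
    rw [MvPolynomial.aeval_zero'] at this
    simpa using this
  have hp : p ∈ Ideal.span (MvPolynomial.X '' (Set.univ : Set (Fin n)) :
      Set (MvPolynomial (Fin n) ℂ)) := by
    rw [MvPolynomial.mem_ideal_span_X_image]
    intro m hm
    by_contra h
    push_neg at h
    have hm0 : m = 0 := by
      ext i
      exact h i (Set.mem_univ i)
    rw [hm0] at hm
    exact (MvPolynomial.mem_support_iff.mp hm) hc
  -- the image of an element of the span of the `X i` is in the nilradical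
  have key : ∀ q ∈ Ideal.span (MvPolynomial.X '' (Set.univ : Set (Fin n)) :
      Set (MvPolynomial (Fin n) ℂ)),
      (Ideal.Quotient.mk (zeonIdeal n)) q ∈ nilradical (Zeon n) := by
    intro q hq
    have : (Ideal.Quotient.mk (zeonIdeal n)) q ∈
        Ideal.map (Ideal.Quotient.mk (zeonIdeal n))
          (Ideal.span (MvPolynomial.X '' (Set.univ : Set (Fin n)))) :=
      Ideal.mem_map_of_mem _ hq
    rw [Ideal.map_span] at this
    refine Ideal.span_le.mpr ?_ this
    rintro _ ⟨_, ⟨i, -, rfl⟩, rfl⟩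
    refine mem_nilradical.mpr ⟨2, ?_⟩
    rw [← map_pow, Ideal.Quotient.eq_zero_iff_mem]
    exact Ideal.subset_span ⟨i, rfl⟩
  exact mem_nilradical.mp (key p hp)

/-- k-th roots of `1 + nilpotent` in a commutative ℂ-algebra. -/
lemma one_add_nilpotent_root {A : Type*} [CommRing A] [Algebra ℂ A] (k : ℕ) (hk : 1 ≤ k) :
    ∀ j : ℕ, ∀ m : A, m ^ j = 0 → ∃ v : A, IsNilpotent v ∧ (1 + v) ^ k = 1 + m := by
  intro j
  induction j using Nat.strong_induction_on with
  | _ j ih =>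
    intro m hm
    match j, hm with
    | 0, hm =>
      have h01 : (1 : A) = 0 := by simpa using hm
      have : Subsingleton A := subsingleton_of_zero_eq_one h01.symm
      exact ⟨0, ⟨0, Subsingleton.elim _ _⟩, Subsingleton.elim _ _⟩
    | 1, hm =>
      refine ⟨0, IsNilpotent.zero, ?_⟩
      rw [pow_one] at hm
      simp [hm]
    | (j + 2), hm =>
      set v₁ : A := algebraMap ℂ A ((k : ℂ)⁻¹) * m with hv₁
      have hkC : (k : ℂ) ≠ 0 := Nat.cast_ne_zero.mpr (by omega)
      have hkv₁ : (k : A) * v₁ = m := by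
        rw [hv₁, ← mul_assoc]
        rw [show ((k : A)) = algebraMap ℂ A (k : ℂ) by push_cast; simp]
        rw [← map_mul, mul_inv_cancel₀ hkC, map_one, one_mul]
      have hv₁nil : IsNilpotent v₁ := by
        refine ⟨j + 2, ?_⟩
        rw [hv₁, mul_pow, hm, mul_zero]
      obtain ⟨c, hc⟩ := binom_rem k v₁
      -- (1+v₁)^k = 1 + m + v₁² c
      rw [hkv₁] at hc
      have hunit : IsUnit ((1 + v₁) ^ k) :=
        (IsNilpotent.isUnit_one_add hv₁nil).pow k
      obtain ⟨U, hU⟩ := hunit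
      set t : A := ↑U⁻¹ with ht
      have hUt : (1 + v₁) ^ k * t = 1 := by
        rw [ht, ← hU]; exact U.mul_inv
      set m' : A := -(v₁ ^ 2 * c * t) with hm'
      have hm'pow : m' ^ (j + 1) = 0 := by
        have h1 : m' ^ (j + 1) = (-(c * t)) ^ (j + 1) * (v₁ ^ 2) ^ (j + 1) := by
          rw [hm']; ring
        have h2 : (v₁ ^ 2) ^ (j + 1) = 0 := by
          have : (v₁ : A) ^ (2 * (j + 1)) = v₁ ^ (j + 2) * v₁ ^ j := by ring
          rw [← pow_mul, this, hv₁, mul_pow, hm, mul_zero, zero_mul]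
        rw [h1, h2, mul_zero]
      obtain ⟨w', hw'nil, hw'⟩ := ih (j + 1) (by omega) m' hm'pow
      refine ⟨v₁ + w' + v₁ * w', ?_, ?_⟩
      · have h1 : IsNilpotent (v₁ * w') := (Commute.all v₁ w').isNilpotent_mul_right hv₁nil
        exact (Commute.all _ _).isNilpotent_add
          ((Commute.all _ _).isNilpotent_add hv₁nil hw'nil) h1
      · have hfac : (1 : A) + (v₁ + w' + v₁ * w') = (1 + v₁) * (1 + w') := by ring
        rw [hfac, mul_pow, hw']
        -- (1+v₁)^k * (1 + m') = 1 + m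
        have : (1 + v₁) ^ k * (1 + m') = (1 + v₁) ^ k - v₁ ^ 2 * c * ((1 + v₁) ^ k * t) := by
          rw [hm']; ring
        rw [this, hUt, mul_one, hc]
        ring

/-- existence of k-th roots of invertible zeons. -/
theorem stmt3 (n : ℕ) (w : Zeon n) (hw : scalarPart n w ≠ 0) (k : ℕ) (hk : 1 ≤ k) :
    ∃ u : Zeon n, scalarPart n u ≠ 0 ∧ u ^ k = w := by
  set a : ℂ := scalarPart n w with ha
  -- w = algebraMap a * (1 + m), m nilpotent
  set m : Zeon n := algebraMap ℂ (Zeon n) a⁻¹ * dualPart n w with hmdef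
  have hscal_alg : ∀ c : ℂ, scalarPart n (algebraMap ℂ (Zeon n) c) = c := fun c =>
    (scalarPart n).commutes c
  have hdual : scalarPart n (dualPart n w) = 0 := by
    rw [dualPart, map_sub, hscal_alg, sub_self]
  have hmscal : scalarPart n m = 0 := by
    rw [hmdef, map_mul, hdual, mul_zero]
  obtain ⟨N, hN⟩ := nilpotent_of_scalarPart_eq_zero n m hmscal
  have hwfac : w = algebraMap ℂ (Zeon n) a * (1 + m) := by
    rw [hmdef, mul_add, mul_one, ← mul_assoc, ← map_mul, mul_inv_cancel₀ hw, map_one,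
      one_mul, dualPart]
    ring
  obtain ⟨v, hvnil, hv⟩ := one_add_nilpotent_root k hk N m hN
  obtain ⟨b, hb⟩ := IsAlgClosed.exists_pow_nat_eq a (Nat.lt_of_lt_of_le Nat.zero_lt_one hk)
  have hbne : b ≠ 0 := by
    intro h
    rw [h, zero_pow (by omega)] at hb
    exact hw hb.symm
  refine ⟨algebraMap ℂ (Zeon n) b * (1 + v), ?_, ?_⟩
  · have hvscal : scalarPart n v = 0 := by
      obtain ⟨j, hj⟩ := hvnil
      have : scalarPart n v ^ j = 0 := by rw [← map_pow, hj, map_zero]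
      exact (pow_eq_zero_iff'.mp this).1
    rw [map_mul, hscal_alg, map_add, map_one, hvscal, add_zero, mul_one]
    exact hbne
  · rw [mul_pow, ← map_pow, hb, hv, ← hwfac]
end
end

section
/- Let α ∈ CZ_n with ⟨α⟩_0 ≠ 0 and k ≥ 1. Then α has exactly k distinct k-th roots in CZ_n; that is, the set {u ∈ CZ_n : u^k = α} has cardinality k. -/
noncomputable section

/-- An element with vanishing scalar part is nilpotent. -/
lemma isNilpotent_of_scalarPart_eq_zero {n : ℕ} {x : Zeon n}
    (hx : scalarPart n x = 0) : IsNilpotent x := by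
  obtain ⟨p, rfl⟩ := Ideal.Quotient.mk_surjective x
  rw [← mem_nilradical, ← Ideal.Quotient.eq_zero_iff_mem]
  have key : ((Ideal.Quotient.mkₐ ℂ (nilradical (Zeon n))).comp
        (Ideal.Quotient.mkₐ ℂ (zeonIdeal n)))
      = (Ideal.Quotient.mkₐ ℂ (nilradical (Zeon n))).comp
        ((Algebra.ofId ℂ (Zeon n)).comp (MvPolynomial.aeval fun _ => (0 : ℂ))) := by
    apply MvPolynomial.algHom_ext
    intro i
    have hz : IsNilpotent ((Ideal.Quotient.mk (zeonIdeal n)) (MvPolynomial.X i)) := by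
      refine ⟨2, ?_⟩
      rw [← map_pow, Ideal.Quotient.eq_zero_iff_mem]
      exact Ideal.subset_span ⟨i, rfl⟩
    simp only [AlgHom.comp_apply, MvPolynomial.aeval_X, map_zero]
    rw [Ideal.Quotient.mkₐ_eq_mk, Ideal.Quotient.eq_zero_iff_mem, mem_nilradical]
    exact hz
  have hkey := congrArg (fun f => f p) key
  simp only [AlgHom.comp_apply, Ideal.Quotient.mkₐ_eq_mk] at hkey
  rw [hkey]
  have hsc : scalarPart n (Ideal.Quotient.mk (zeonIdeal n) p)
      = MvPolynomial.aeval (fun _ => (0 : ℂ)) p := by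
    rfl
  rw [hsc] at hx
  rw [hx]
  simp [Algebra.ofId_apply]

lemma isUnit_of_scalarPart_ne_zero {n : ℕ} {x : Zeon n}
    (hx : scalarPart n x ≠ 0) : IsUnit x := by
  have hd : IsNilpotent (dualPart n x) := by
    apply isNilpotent_of_scalarPart_eq_zero
    simp [dualPart, AlgHom.commutes]
  have hu : IsUnit (algebraMap ℂ (Zeon n) (scalarPart n x)) :=
    (isUnit_iff_ne_zero.mpr hx).map (algebraMap ℂ (Zeon n))
  have hxeq : x = algebraMap ℂ (Zeon n) (scalarPart n x) + dualPart n x := by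
    simp [dualPart]
  rw [hxeq]
  exact hd.isUnit_add_left_of_commute hu (Commute.all _ _)

/-- In a commutative ring, `(1+x)^k = 1 + k*x + x^2 * r`. -/
lemma binom_aux {R : Type*} [CommRing R] (x : R) (k : ℕ) :
    ∃ r : R, (1 + x) ^ k = 1 + (k : R) * x + x ^ 2 * r := by
  induction k with
  | zero => exact ⟨0, by norm_num⟩
  | succ k ih =>
    obtain ⟨r, hr⟩ := ih
    refine ⟨(k : R) + r + x * r, ?_⟩
    rw [pow_succ, hr]
    push_cast
    ring

set_option maxHeartbeats 1600000 in
set_option synthInstance.maxHeartbeats 200000 in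
/-- Key existence result: lifting `k`-th roots of `1 + ε` for nilpotent `ε`. -/
lemma root_one_add {n : ℕ} (k : ℕ) (hk : 1 ≤ k) :
    ∀ m : ℕ, ∀ ε : Zeon n, ε ^ m = 0 →
      ∃ δ : Zeon n, scalarPart n δ = 0 ∧ (1 + δ) ^ k = 1 + ε := by
  intro m
  induction m using Nat.strong_induction_on with
  | _ m ih =>
    intro ε hε
    match m, hε with
    | 0, hε =>
      rw [pow_zero] at hε
      have h10 : (1 : Zeon n) = 0 := hε
      have hε0 : ε = 0 := by
        calc ε = ε * 1 := by ring
          _ = 0 := by rw [h10]; ring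
      exact ⟨0, by simp, by simp [hε0]⟩
    | 1, hε =>
      rw [pow_one] at hε
      have hε0 : ε = 0 := hε
      exact ⟨0, by simp, by simp [hε0]⟩
    | (m + 2), hε =>
      have hkC : (k : ℂ) ≠ 0 := Nat.cast_ne_zero.mpr (by omega)
      set κ : Zeon n := algebraMap ℂ (Zeon n) (k : ℂ)⁻¹ with hκ
      have hκk : (k : Zeon n) * κ = 1 := by
        rw [hκ, ← map_natCast (algebraMap ℂ (Zeon n)) k, ← map_mul,
          mul_inv_cancel₀ hkC, map_one]
      set δ₀ : Zeon n := κ * ε with hδ₀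
      have hεsc : scalarPart n ε = 0 := by
        have h := congrArg (scalarPart n) hε
        rw [map_pow, map_zero] at h
        exact pow_eq_zero_iff (by omega : m + 2 ≠ 0) |>.mp h
      have hδ₀sc : scalarPart n δ₀ = 0 := by
        rw [hδ₀, map_mul, hεsc, mul_zero]
      obtain ⟨r, hr⟩ := binom_aux δ₀ k
      have hkδ₀ : (k : Zeon n) * δ₀ = ε := by
        rw [hδ₀, ← mul_assoc, hκk, one_mul]
      have hu₀ : IsUnit ((1 + δ₀) ^ k) := by
        refine IsUnit.pow k ?_
        apply isUnit_of_scalarPart_ne_zero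
        rw [map_add, map_one, hδ₀sc, add_zero]
        exact one_ne_zero
      obtain ⟨w, hw⟩ := hu₀.exists_right_inv
      set ε' : Zeon n := (1 + ε) * w - 1 with hε'def
      have hε'eq : ε' = ε ^ 2 * (-(κ ^ 2 * r * w)) := by
        have h1 : (1 + ε) - (1 + δ₀) ^ k = -(δ₀ ^ 2 * r) := by
          rw [hr, hkδ₀]; ring
        have h2 : ε' = ((1 + ε) - (1 + δ₀) ^ k) * w := by
          rw [hε'def, sub_mul, hw]
        rw [h2, h1, hδ₀]; ring
      have hε'pow : ε' ^ (m + 1) = 0 := by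
        rw [hε'eq, mul_pow, ← pow_mul]
        have hz : ε ^ (2 * (m + 1)) = 0 :=
          pow_eq_zero_of_le (by omega) hε
        rw [hz, zero_mul]
      obtain ⟨δ', hδ'sc, hδ'⟩ := ih (m + 1) (by omega) ε' hε'pow
      refine ⟨(1 + δ₀) * (1 + δ') - 1, ?_, ?_⟩
      · rw [map_sub, map_mul, map_add, map_add, map_one, hδ₀sc, hδ'sc]
        norm_num
      · have hrw : (1 : Zeon n) + ((1 + δ₀) * (1 + δ') - 1)
            = (1 + δ₀) * (1 + δ') := by ring
        rw [hrw, mul_pow, hδ']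
        calc (1 + δ₀) ^ k * (1 + ε')
            = (1 + ε) * ((1 + δ₀) ^ k * w) := by rw [hε'def]; ring
          _ = 1 + ε := by rw [hw, mul_one]

/-- Existence of a root with prescribed scalar part. -/
lemma exists_root {n : ℕ} (α : Zeon n) (hα : scalarPart n α ≠ 0) (k : ℕ) (hk : 1 ≤ k)
    (c : ℂ) (hc : c ^ k = scalarPart n α) :
    ∃ u : Zeon n, u ^ k = α ∧ scalarPart n u = c := by
  have hc0 : c ≠ 0 := by
    intro h
    rw [h, zero_pow (by omega : k ≠ 0)] at hc
    exact hα hc.symm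
  have hck : (c : ℂ) ^ k ≠ 0 := pow_ne_zero _ hc0
  set ε : Zeon n := (c ^ k)⁻¹ • α - 1 with hε
  have hεsc : scalarPart n ε = 0 := by
    rw [hε, map_sub, map_smul, map_one, smul_eq_mul, hc,
      inv_mul_cancel₀ hα, sub_self]
  obtain ⟨m, hm⟩ := isNilpotent_of_scalarPart_eq_zero hεsc
  obtain ⟨δ, hδsc, hδ⟩ := root_one_add k hk m ε hm
  refine ⟨c • (1 + δ), ?_, ?_⟩
  · rw [smul_pow, hδ, hε, add_sub_cancel, smul_smul, mul_inv_cancel₀ hck, one_smul]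
  · rw [map_smul, map_add, map_one, hδsc, add_zero, smul_eq_mul, mul_one]

/-- Uniqueness of roots with equal scalar parts. -/
lemma root_unique {n : ℕ} {α : Zeon n} (hα : scalarPart n α ≠ 0) {k : ℕ} (hk : 1 ≤ k)
    {u v : Zeon n} (hu : u ^ k = α) (hv : v ^ k = α)
    (hsc : scalarPart n u = scalarPart n v) : u = v := by
  set c : ℂ := scalarPart n u with hc
  have hck : c ^ k = scalarPart n α := by rw [hc, ← map_pow, hu]
  have hc0 : c ≠ 0 := by
    intro h
    rw [h, zero_pow (by omega : k ≠ 0)] at hck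
    exact hα hck.symm
  set S : Zeon n := ∑ i ∈ Finset.range k, u ^ i * v ^ (k - 1 - i) with hS
  have hgeom : S * (u - v) = u ^ k - v ^ k := geom_sum₂_mul u v k
  have hSsc : scalarPart n S = k * c ^ (k - 1) := by
    rw [hS, map_sum]
    have hterm : ∀ i ∈ Finset.range k,
        scalarPart n (u ^ i * v ^ (k - 1 - i)) = c ^ (k - 1) := by
      intro i hi
      rw [Finset.mem_range] at hi
      rw [map_mul, map_pow, map_pow, ← hsc, ← hc, ← pow_add]
      congr 1
      omega
    rw [Finset.sum_congr rfl hterm, Finset.sum_const, Finset.card_range,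
      nsmul_eq_mul]
  have hSunit : IsUnit S := by
    apply isUnit_of_scalarPart_ne_zero
    rw [hSsc]
    exact mul_ne_zero (Nat.cast_ne_zero.mpr (by omega)) (pow_ne_zero _ hc0)
  have hz : S * (u - v) = 0 := by rw [hgeom, hu, hv, sub_self]
  obtain ⟨U, hU⟩ := hSunit
  have : u - v = 0 := by
    have := congrArg (fun y => (↑U⁻¹ : Zeon n) * y) hz
    simpa [← hU, ← mul_assoc] using this
  exact sub_eq_zero.mp this

/-- an invertible zeon has exactly `k` distinct `k`-th roots. -/
theorem stmt4 (n : ℕ) (α : Zeon n) (hα : scalarPart n α ≠ 0) (k : ℕ) (hk : 1 ≤ k) :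
    {u : Zeon n | u ^ k = α}.ncard = k := by
  classical
  set a : ℂ := scalarPart n α with ha
  set S : Set (Zeon n) := {u : Zeon n | u ^ k = α} with hSdef
  set T : Set ℂ := {c : ℂ | c ^ k = a} with hTdef
  have himg : scalarPart n '' S = T := by
    ext c
    constructor
    · rintro ⟨u, hu, rfl⟩
      have : scalarPart n u ^ k = a := by rw [← map_pow, hu]
      exact this
    · intro hc
      obtain ⟨u, hu, husc⟩ := exists_root α hα k hk c hc
      exact ⟨u, hu, husc⟩
  have hinj : Set.InjOn (scalarPart n) S := fun u hu v hv hsc =>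
    root_unique hα hk hu hv hsc
  have h1 : S.ncard = T.ncard := by
    rw [← himg, Set.ncard_image_of_injOn hinj]
  rw [h1, hTdef]
  have hζ := Complex.isPrimitiveRoot_exp k (by omega)
  have ha0 : a ≠ 0 := hα
  have hTfin : {c : ℂ | c ^ k = a} = ↑(Polynomial.nthRoots k a).toFinset := by
    ext c
    simp [Polynomial.mem_nthRoots (by omega : 0 < k)]
  rw [hTfin, Set.ncard_coe_finset,
    Multiset.toFinset_card_of_nodup (hζ.nthRoots_nodup ha0),
    hζ.card_nthRoots]
  exact if_pos (IsAlgClosed.exists_pow_nat_eq a (by omega : 0 < k))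
end
end

section
/- Let f be a nonzero complex polynomial and φ its zeon extension to CZ_n. Then w ∈ CZ_n satisfies φ(w) = 0 if and only if f(⟨w⟩_0) = 0 and (Dw)^{μ} = 0, where μ = μ_f(⟨w⟩_0) is the multiplicity of ⟨w⟩_0 as a zero of f and Dw = w − ⟨w⟩_0. In particular, if f has no complex zeros then φ has no zeros. -/
noncomputable section

open MvPolynomial in
lemma prod_mem_zeon (n : ℕ) (g : Fin (n+1) → Fin n) :
    (∏ i, (X (g i) : MvPolynomial (Fin n) ℂ)) ∈ zeonIdeal n := by
  have hni : ¬ Function.Injective g := by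
    intro hinj
    have := Fintype.card_le_of_injective g hinj
    simp at this
  rw [Function.not_injective_iff] at hni
  obtain ⟨j, k, hgjk, hjk⟩ := hni
  have hk : k ∈ Finset.univ.erase j := Finset.mem_erase.2 ⟨Ne.symm hjk, Finset.mem_univ k⟩
  have h1 : (∏ i, (X (g i) : MvPolynomial (Fin n) ℂ)) =
      X (g j) ^ 2 * ∏ i ∈ (Finset.univ.erase j).erase k, X (g i) := by
    rw [← Finset.mul_prod_erase Finset.univ (fun i => (X (g i) : MvPolynomial (Fin n) ℂ))
      (Finset.mem_univ j), ← Finset.mul_prod_erase _ _ hk, hgjk]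
    ring
  rw [h1]
  exact Ideal.mul_mem_right _ _ (Ideal.subset_span ⟨g j, rfl⟩)

open MvPolynomial in
lemma span_X_pow_le (n : ℕ) :
    (Ideal.span (Set.range (X : Fin n → MvPolynomial (Fin n) ℂ))) ^ (n + 1) ≤ zeonIdeal n := by
  rw [Ideal.span, Submodule.span_pow]; rw [Submodule.span_le]
  rintro a ha
  rw [Set.mem_pow] at ha
  obtain ⟨F, hF⟩ := ha
  choose g hg using fun i => (F i).2
  have : a = ∏ i, (X (g i) : MvPolynomial (Fin n) ℂ) := by
    rw [← hF, List.prod_ofFn]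
    exact Finset.prod_congr rfl fun i _ => (hg i).symm
  rw [this]
  exact prod_mem_zeon n g

lemma mk_scalarPart (n : ℕ) (p : MvPolynomial (Fin n) ℂ) :
    scalarPart n (Ideal.Quotient.mk _ p) = MvPolynomial.aeval (fun _ => (0:ℂ)) p := rfl

open MvPolynomial in
lemma pow_eq_zero_of_scalar_zero (n : ℕ) (u : Zeon n) (h : scalarPart n u = 0) :
    u ^ (n + 1) = 0 := by
  obtain ⟨p, rfl⟩ := Ideal.Quotient.mk_surjective u
  rw [mk_scalarPart] at h
  have hc : constantCoeff p = 0 := by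
    have := MvPolynomial.aeval_zero (S₁ := ℂ) p
    simpa [this] using h
  have hp : p ∈ Ideal.span (Set.range (X : Fin n → MvPolynomial (Fin n) ℂ)) := by
    rw [← Set.image_univ, mem_ideal_span_X_image]
    intro m hm
    by_contra hcon
    push_neg at hcon
    have : m = 0 := Finsupp.ext fun i => hcon i (Set.mem_univ i)
    rw [mem_support_iff, this] at hm
    exact hm hc
  have : p ^ (n + 1) ∈ zeonIdeal n :=
    span_X_pow_le n (Ideal.pow_mem_pow hp _)
  rw [← map_pow, Ideal.Quotient.eq_zero_iff_mem]
  exact this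

lemma dual_nilpotent (n : ℕ) (u : Zeon n) : IsNilpotent (dualPart n u) := by
  refine ⟨n + 1, pow_eq_zero_of_scalar_zero n _ ?_⟩
  simp [dualPart]

lemma isUnit_of_scalar_ne (n : ℕ) (u : Zeon n) (h : scalarPart n u ≠ 0) : IsUnit u := by
  have hu : IsUnit (algebraMap ℂ (Zeon n) (scalarPart n u)) :=
    (isUnit_iff_ne_zero.2 h).map (algebraMap ℂ (Zeon n))
  have := (dual_nilpotent n u).isUnit_add_right_of_commute hu (Commute.all _ _)
  simpa [dualPart] using this

lemma scalarPart_aeval (n : ℕ) (w : Zeon n) (g : Polynomial ℂ) :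
    scalarPart n (Polynomial.aeval w g) = g.eval (scalarPart n w) := by
  rw [← Polynomial.aeval_algHom_apply (scalarPart n) w g]
  simp [Polynomial.aeval_def, Polynomial.eval, -Polynomial.eval₂_id]

/-- characterization of the zeros of the zeon extension of a nonzero
complex polynomial, via the multiplicity of the scalar part. -/
theorem stmt11 (n : ℕ) (f : Polynomial ℂ) (hf : f ≠ 0) :
    (∀ w : Zeon n, Polynomial.aeval w f = 0 ↔
      f.eval (scalarPart n w) = 0 ∧
        dualPart n w ^ (f.rootMultiplicity (scalarPart n w)) = 0) ∧
    ((∀ z : ℂ, f.eval z ≠ 0) → ∀ w : Zeon n, Polynomial.aeval w f ≠ 0) := by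
  have key : ∀ w : Zeon n, Polynomial.aeval w f = 0 ↔
      f.eval (scalarPart n w) = 0 ∧
        dualPart n w ^ (f.rootMultiplicity (scalarPart n w)) = 0 := by
    intro w
    set r := scalarPart n w with hr
    set μ := f.rootMultiplicity r with hμ
    set g := f /ₘ (Polynomial.X - Polynomial.C r) ^ μ with hgdef
    have hgr : g.eval r ≠ 0 := Polynomial.eval_divByMonic_pow_rootMultiplicity_ne_zero r hf
    have hfgeq : (Polynomial.X - Polynomial.C r) ^ μ * g = f :=
      Polynomial.pow_mul_divByMonic_rootMultiplicity_eq f r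
    have hkey : Polynomial.aeval w f = dualPart n w ^ μ * Polynomial.aeval w g := by
      rw [← hfgeq, map_mul, map_pow, map_sub, Polynomial.aeval_X, Polynomial.aeval_C]
      rfl
    have hGunit : IsUnit (Polynomial.aeval w g) := by
      apply isUnit_of_scalar_ne
      rw [scalarPart_aeval]
      exact hgr
    constructor
    · intro h
      have h1 : f.eval r = 0 := by
        rw [← scalarPart_aeval n w f, h, map_zero]
      refine ⟨h1, ?_⟩
      rw [hkey] at h
      exact (hGunit.mul_left_eq_zero).1 h
    · rintro ⟨-, h2⟩
      rw [hkey, h2, zero_mul]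
  exact ⟨key, fun hz w h => hz _ ((key w).1 h).1⟩
end
end

section
/- Let f be a nonzero complex polynomial and φ its zeon extension to CZ_n. If r is a simple zero of f (μ_f(r) = 1), then the only zero w of φ with ⟨w⟩_0 = r is w = r itself. -/
noncomputable section

lemma nilpotent_of_scalarPart_zero (n : ℕ) (u : Zeon n) (h : scalarPart n u = 0) :
    IsNilpotent u := by
  obtain ⟨p, rfl⟩ := Ideal.Quotient.mk_surjective (I := zeonIdeal n) u
  have hsc : MvPolynomial.constantCoeff p = 0 := by
    have : (MvPolynomial.aeval fun _ : Fin n => (0:ℂ)) p = 0 := h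
    rwa [MvPolynomial.aeval_zero'] at this
  have hp : p ∈ Ideal.span (MvPolynomial.X '' (Set.univ : Set (Fin n)) :
      Set (MvPolynomial (Fin n) ℂ)) := by
    rw [MvPolynomial.mem_ideal_span_X_image]
    intro m hm
    by_contra hc
    push_neg at hc
    have hm0 : m = 0 := by
      ext i
      exact hc i (Set.mem_univ i)
    rw [hm0] at hm
    exact (MvPolynomial.mem_support_iff.mp hm) (by simpa [MvPolynomial.constantCoeff_eq] using hsc)
  have hmap : (Ideal.Quotient.mk (zeonIdeal n)) p ∈
      Ideal.map (Ideal.Quotient.mk (zeonIdeal n))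
        (Ideal.span (MvPolynomial.X '' (Set.univ : Set (Fin n)))) :=
    Ideal.mem_map_of_mem _ hp
  rw [Ideal.map_span, ← Set.image_comp] at hmap
  have hle : Ideal.span ((⇑(Ideal.Quotient.mk (zeonIdeal n)) ∘ MvPolynomial.X) ''
      (Set.univ : Set (Fin n))) ≤ nilradical (Zeon n) := by
    rw [Ideal.span_le]
    rintro _ ⟨i, -, rfl⟩
    refine mem_nilradical.mpr ⟨2, ?_⟩
    show (Ideal.Quotient.mk (zeonIdeal n)) (MvPolynomial.X i) ^ 2 = 0
    rw [← map_pow, Ideal.Quotient.eq_zero_iff_mem]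
    exact Ideal.subset_span ⟨i, rfl⟩
  exact mem_nilradical.mp (hle hmap)

/-- a simple zero `r` of `f` lifts only to the trivial zeon zero `r`. -/
theorem stmt12 (n : ℕ) (f : Polynomial ℂ) (hf : f ≠ 0) (r : ℂ)
    (hr : f.rootMultiplicity r = 1) :
    Polynomial.aeval (algebraMap ℂ (Zeon n) r) f = 0 ∧
    ∀ w : Zeon n, scalarPart n w = r → Polynomial.aeval w f = 0 →
      w = algebraMap ℂ (Zeon n) r := by
  have hroot : f.eval r = 0 := by
    have : 0 < f.rootMultiplicity r := by omega
    exact ((Polynomial.rootMultiplicity_pos hf).mp this)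
  have hdvd : (Polynomial.X - Polynomial.C r) ∣ f :=
    Polynomial.dvd_iff_isRoot.mpr hroot
  obtain ⟨g, hg⟩ := hdvd
  have hgr : g.eval r ≠ 0 := by
    intro h0
    have : (Polynomial.X - Polynomial.C r) ∣ g := Polynomial.dvd_iff_isRoot.mpr h0
    obtain ⟨g2, hg2⟩ := this
    have : (Polynomial.X - Polynomial.C r) ^ 2 ∣ f := by
      rw [hg, hg2]; ring_nf; exact ⟨g2, by ring⟩
    have h2 : 2 ≤ f.rootMultiplicity r :=
      (Polynomial.le_rootMultiplicity_iff hf).mpr this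
    omega
  constructor
  · rw [Polynomial.aeval_algebraMap_apply]
    simp [hroot]
  · intro w hsw hwz
    have key : Polynomial.aeval w f =
        (w - algebraMap ℂ (Zeon n) r) * Polynomial.aeval w g := by
      rw [hg]
      simp [Polynomial.aeval_X, Polynomial.aeval_C]
    have hu : IsUnit (Polynomial.aeval w g) := by
      have hsc : scalarPart n (Polynomial.aeval w g) = g.eval r := by
        rw [← Polynomial.aeval_algHom_apply, hsw]
        simp
      have hnil : IsNilpotent (Polynomial.aeval w g
          - algebraMap ℂ (Zeon n) (g.eval r)) := by
        apply nilpotent_of_scalarPart_zero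
        simp [map_sub, hsc]
      have hunit : IsUnit (algebraMap ℂ (Zeon n) (g.eval r)) :=
        (isUnit_iff_ne_zero.mpr hgr).map _
      have := IsNilpotent.isUnit_add_left_of_commute hnil hunit (Commute.all _ _)
      simpa using this
    rw [key] at hwz
    have : w - algebraMap ℂ (Zeon n) r = 0 := by
      rcases hu with ⟨v, hv⟩
      have := congrArg (fun x => x * (↑v⁻¹ : Zeon n)) hwz
      simpa [← hv, mul_assoc] using this
    linear_combination this
end
end

section
/- Let f be a nonzero complex polynomial with a zero r of multiplicity at least 2, and n ≥ 1. Then the zeon extension φ of f to CZ_n has infinitely many zeros; in particular φ(r + a ζ_1) = 0 for every a ∈ ℂ. -/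
noncomputable section

lemma zeta_sq (n : ℕ) (i : Fin n) : zeta n i ^ 2 = 0 := by
  have : (MvPolynomial.X i : MvPolynomial (Fin n) ℂ) ^ 2 ∈ zeonIdeal n :=
    Ideal.subset_span ⟨i, rfl⟩
  rw [zeta, ← map_pow, Ideal.Quotient.eq_zero_iff_mem]
  exact this

/-- Map to dual numbers sending each generator to ε. -/
def toDual (n : ℕ) : Zeon n →ₐ[ℂ] DualNumber ℂ :=
  Ideal.Quotient.liftₐ (zeonIdeal n)
    (MvPolynomial.aeval fun _ => (DualNumber.eps : DualNumber ℂ)) (by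
    intro a ha
    have h : zeonIdeal n ≤ RingHom.ker
        (MvPolynomial.aeval (R := ℂ)
          fun _ : Fin n => (DualNumber.eps : DualNumber ℂ)).toRingHom := by
      rw [zeonIdeal, Ideal.span_le]
      rintro _ ⟨i, rfl⟩
      rw [SetLike.mem_coe, RingHom.mem_ker]
      simp only [AlgHom.toRingHom_eq_coe, RingHom.coe_coe, map_pow, MvPolynomial.aeval_X]
      rw [sq, DualNumber.eps_mul_eps]
    exact h ha)

lemma toDual_zeta (n : ℕ) (i : Fin n) : toDual n (zeta n i) = DualNumber.eps := by
  rw [toDual, zeta]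
  exact MvPolynomial.aeval_X _ i

/-- a multiple zero of `f` yields infinitely many zeon zeros. -/
theorem stmt13 (n : ℕ) (hn : 1 ≤ n) (f : Polynomial ℂ) (hf : f ≠ 0) (r : ℂ)
    (hr : (Polynomial.X - Polynomial.C r) ^ 2 ∣ f) :
    {w : Zeon n | Polynomial.aeval w f = 0}.Infinite ∧
    ∀ a : ℂ, Polynomial.aeval
      (algebraMap ℂ (Zeon n) r + a • zeta n ⟨0, hn⟩) f = 0 := by
  obtain ⟨g, rfl⟩ := hr
  have key : ∀ a : ℂ, Polynomial.aeval
      (algebraMap ℂ (Zeon n) r + a • zeta n ⟨0, hn⟩)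
      ((Polynomial.X - Polynomial.C r) ^ 2 * g) = 0 := by
    intro a
    rw [map_mul, map_pow, map_sub, Polynomial.aeval_X, Polynomial.aeval_C]
    have : (algebraMap ℂ (Zeon n) r + a • zeta n ⟨0, hn⟩ - algebraMap ℂ (Zeon n) r) ^ 2
        = 0 := by
      rw [add_sub_cancel_left, smul_pow, zeta_sq, smul_zero]
    rw [this, zero_mul]
  refine ⟨?_, key⟩
  apply Set.infinite_of_injective_forall_mem
    (f := fun a : ℂ => algebraMap ℂ (Zeon n) r + a • zeta n ⟨0, hn⟩) ?_ key
  intro a b hab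
  have h : (a - b) • zeta n ⟨0, hn⟩ = 0 := by
    have := sub_eq_zero.mpr hab
    rw [add_sub_add_left_eq_sub, ← sub_smul] at this
    exact this
  have h2 : ((a - b) • DualNumber.eps : DualNumber ℂ) = 0 := by
    rw [← toDual_zeta n ⟨0, hn⟩, ← map_smul, h, map_zero]
  have h3 := congrArg TrivSqZeroExt.snd h2
  simp only [TrivSqZeroExt.snd_smul, DualNumber.snd_eps, smul_eq_mul, mul_one,
    TrivSqZeroExt.snd_zero] at h3
  exact sub_eq_zero.mp h3
end
end

section
/- Let f be a nonzero complex polynomial with a zero r of multiplicity m, and suppose n < m. Then φ(w) = 0 for every w ∈ CZ_n with ⟨w⟩_0 = r, where φ is the zeon extension of f. -/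
noncomputable section

/-- The ideal of polynomials supported on monomials of total degree ≥ k. -/
def degIdeal (n k : ℕ) : Ideal (MvPolynomial (Fin n) ℂ) :=
  Ideal.span ((fun s => MvPolynomial.monomial s (1 : ℂ)) ''
    {μ : Fin n →₀ ℕ | k ≤ μ.sum fun _ e => e})

lemma mem_degIdeal {n k : ℕ} {p : MvPolynomial (Fin n) ℂ} :
    p ∈ degIdeal n k ↔ ∀ m ∈ p.support, k ≤ m.sum fun _ e => e := by
  rw [degIdeal, MvPolynomial.mem_ideal_span_monomial_image]
  constructor
  · rintro h m hm
    obtain ⟨s, hs, hsm⟩ := h m hm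
    exact hs.trans (Finsupp.sum_le_sum_index hsm (fun _ _ => fun _ _ h => h) (by simp))
  · intro h m hm
    exact ⟨m, h m hm, le_rfl⟩

lemma degIdeal_mul {n a b : ℕ} : degIdeal n a * degIdeal n b ≤ degIdeal n (a + b) := by
  rw [degIdeal, degIdeal, Ideal.span_mul_span]
  rw [Ideal.span_le]
  rintro _ ⟨_, ⟨μ, hμ, rfl⟩, _, ⟨ν, hν, rfl⟩, rfl⟩
  beta_reduce
  rw [MvPolynomial.monomial_mul, mul_one]
  refine Ideal.subset_span ⟨μ + ν, ?_, rfl⟩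
  simpa [Finsupp.sum_add_index] using add_le_add hμ hν

lemma pow_mem_degIdeal {n : ℕ} {p : MvPolynomial (Fin n) ℂ} (hp : p ∈ degIdeal n 1) :
    ∀ k, p ^ k ∈ degIdeal n k := by
  intro k
  induction k with
  | zero => simp [mem_degIdeal]
  | succ k ih =>
      have := degIdeal_mul (n := n) (a := k) (b := 1) (Ideal.mul_mem_mul ih hp)
      simpa [pow_succ] using this

lemma degIdeal_le_zeon (n : ℕ) : degIdeal n (n + 1) ≤ zeonIdeal n := by
  rw [degIdeal, Ideal.span_le]
  rintro _ ⟨μ, hμ, rfl⟩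
  simp only [Set.mem_setOf_eq] at hμ
  -- pigeonhole: some exponent ≥ 2
  have h2 : ∃ i, 2 ≤ μ i := by
    by_contra h
    push_neg at h
    have : (μ.sum fun _ e => e) ≤ ∑ i : Fin n, 1 := by
      rw [Finsupp.sum]
      calc (∑ i ∈ μ.support, μ i) ≤ ∑ i ∈ μ.support, 1 :=
            Finset.sum_le_sum fun i _ => Nat.lt_succ_iff.mp (h i)
        _ ≤ ∑ i : Fin n, 1 := Finset.sum_le_sum_of_subset (Finset.subset_univ _)
    simp at this
    omega
  obtain ⟨i, hi⟩ := h2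
  have hdvd : (MvPolynomial.X i : MvPolynomial (Fin n) ℂ) ^ 2 ∣ MvPolynomial.monomial μ 1 := by
    rw [MvPolynomial.X_pow_eq_monomial]
    refine (MvPolynomial.monomial_dvd_monomial).2 ⟨Or.inr ?_, one_dvd _⟩
    intro j
    rcases eq_or_ne j i with rfl | hji
    · simpa using hi
    · simp [Finsupp.single_apply, hji.symm]
  obtain ⟨q, hq⟩ := hdvd
  show MvPolynomial.monomial μ 1 ∈ zeonIdeal n
  rw [hq]
  exact Ideal.mul_mem_right _ _ (Ideal.subset_span ⟨i, rfl⟩)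

lemma nilpotent_of_scalarPart_zero_s14 {n : ℕ} (u : Zeon n) (hu : scalarPart n u = 0) :
    u ^ (n + 1) = 0 := by
  obtain ⟨p, rfl⟩ := Ideal.Quotient.mk_surjective u
  have hc : MvPolynomial.aeval (fun _ : Fin n => (0 : ℂ)) p = 0 := hu
  have hp1 : p ∈ degIdeal n 1 := by
    rw [mem_degIdeal]
    intro m hm
    rcases Nat.eq_zero_or_pos (m.sum fun _ e => e) with h0 | h
    · exfalso
      have hm0 : m = 0 := by
        ext i
        by_contra hi
        have hi' : i ∈ m.support := Finsupp.mem_support_iff.mpr hi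
        have := Finset.sum_eq_zero_iff.mp h0 i hi'
        exact hi this
      rw [hm0] at hm
      have : MvPolynomial.constantCoeff p = 0 := by
        simpa using hc
      exact MvPolynomial.mem_support_iff.mp hm this
    · exact h
  have := degIdeal_le_zeon n (pow_mem_degIdeal hp1 (n + 1))
  rw [← map_pow]
  exact (Ideal.Quotient.eq_zero_iff_mem).2 this

/-- a zero of multiplicity `m > n` absorbs every zeon with that scalar part. -/
theorem stmt14 (n : ℕ) (f : Polynomial ℂ) (hf : f ≠ 0) (r : ℂ) (m : ℕ)
    (hr : f.rootMultiplicity r = m) (hnm : n < m) :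
    ∀ w : Zeon n, scalarPart n w = r → Polynomial.aeval w f = 0 := by
  intro w hw
  obtain ⟨g, hg⟩ := Polynomial.pow_rootMultiplicity_dvd f r
  rw [hr] at hg
  set d : Zeon n := w - algebraMap ℂ (Zeon n) r with hd
  have hds : scalarPart n d = 0 := by
    simp [hd, map_sub, hw, AlgHom.commutes]
  have hdn : d ^ (n + 1) = 0 := nilpotent_of_scalarPart_zero_s14 d hds
  have hdm : d ^ m = 0 := by
    have : m = (n + 1) + (m - (n + 1)) := by omega
    rw [this, pow_add, hdn, zero_mul]
  calc Polynomial.aeval w f = Polynomial.aeval w ((Polynomial.X - Polynomial.C r) ^ m * g) := by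
        rw [← hg]
    _ = d ^ m * Polynomial.aeval w g := by
        simp [map_mul, map_pow, map_sub, hd]
    _ = 0 := by rw [hdm, zero_mul]
end
end
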